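/- Let H be a finitely generated abelian group with basis {(eᵢ, nᵢ) : i ∈ I}, let S be an affine space over H^{(2)} = Hom(H, ℤ/2ℤ), and fix a base point σ₀ ∈ S. Define ēᵢ : S → ℤ/2ℤ by ēᵢ(σ₀ + y) = y(eᵢ). Then {(1̄, 2)} ∪ {(ēᵢ, gcd(2, nᵢ)) : i ∈ I} is a basis of A(S, ℤ/2ℤ): the constant function 1̄ has order 2, each ēᵢ has additive order gcd(2, nᵢ) (with gcd(2, 0) = 2), and A(S, ℤ/2ℤ) is the internal direct sum of the cyclic subgroups generated by 1̄ and the ēᵢ. -/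

import Mathlib

/-- A family `{(eᵢ, nᵢ)}` is a (cyclic) basis of the abelian group `A` if each `eᵢ` has
additive order `nᵢ` (`nᵢ = 0` meaning infinite order) and `A` is the internal direct sum of
the cyclic subgroups generated by the `eᵢ`. -/
def IsCyclicBasis {A : Type*} [AddCommGroup A] {I : Type*} [Fintype I] [DecidableEq I]
    (e : I → A) (n : I → ℕ) : Prop :=
  (∀ i, addOrderOf (e i) = n i) ∧
    DirectSum.IsInternal (fun i => AddSubgroup.zmultiples (e i))

section Affine

variable (H : Type*) [AddCommGroup H] (S : Type*) [AddTorsor (H →+ ZMod 2) S]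

/-- A function `f : S → ℤ/2ℤ` is affine if there is a homomorphism
`l : Hom(H, ℤ/2ℤ) → ℤ/2ℤ` (its linear part) with `f(σ + y) = f(σ) + l(y)`. -/
def IsAffineFn (f : S → ZMod 2) : Prop :=
  ∃ l : (H →+ ZMod 2) →+ ZMod 2, ∀ (σ : S) (y : H →+ ZMod 2), f (y +ᵥ σ) = f σ + l y

/-- The abelian group `A(S, ℤ/2ℤ)` of affine functions `S → ℤ/2ℤ` under pointwise addition. -/
def AffineFns : AddSubgroup (S → ZMod 2) where
  carrier := {f | IsAffineFn H S f}
  add_mem' := by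
    rintro f g ⟨lf, hf⟩ ⟨lg, hg⟩
    exact ⟨lf + lg, fun σ y => by
      simp only [Pi.add_apply, AddMonoidHom.add_apply, hf σ y, hg σ y]; abel⟩
  zero_mem' := ⟨0, fun σ y => by simp⟩
  neg_mem' := by
    rintro f ⟨lf, hf⟩
    exact ⟨-lf, fun σ y => by
      simp only [Pi.neg_apply, AddMonoidHom.neg_apply, hf σ y]; abel⟩

/-- The constant function `1̄`, as an element of `A(S, ℤ/2ℤ)`. -/
def oneAff : AffineFns H S :=
  ⟨fun _ => 1, ⟨0, fun σ y => by simp⟩⟩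

/-- Evaluation at `x ∈ H`, as a homomorphism `Hom(H, ℤ/2ℤ) → ℤ/2ℤ`. -/
def evalAt {H : Type*} [AddCommGroup H] (x : H) : (H →+ ZMod 2) →+ ZMod 2 where
  toFun y := y x
  map_zero' := rfl
  map_add' _ _ := rfl

/-- The function `x̄ : S → ℤ/2ℤ` determined by a base point `σ₀ ∈ S` and `x ∈ H`: it is the
unique affine function with `x̄(σ₀ + y) = y(x)`; as an element of `A(S, ℤ/2ℤ)`. -/
def ebarA (σ₀ : S) (x : H) : AffineFns H S :=
  ⟨fun σ => (σ -ᵥ σ₀) x, ⟨evalAt x, fun σ y => by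
    simp only [vadd_vsub_assoc, AddMonoidHom.add_apply]
    exact add_comm _ _⟩⟩

end Affine

section Aux

open DirectSum

variable {H : Type*} [AddCommGroup H]

lemma zmod2_two_nsmul (x : ZMod 2) : 2 • x = 0 := by revert x; decide

lemma zmod2_val_smul_one (c : ZMod 2) : c.val • (1 : ZMod 2) = c := by revert c; decide

lemma zmod2_val_smul_comm (a b : ZMod 2) : a.val • b = b.val • a := by revert a b; decide

/-- A chosen coefficient of an element of `zmultiples a`. -/
noncomputable def zcoeff {a : H} (x : AddSubgroup.zmultiples a) : ℤ :=
  (AddSubgroup.mem_zmultiples_iff.mp x.2).choose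

lemma zcoeff_spec {a : H} (x : AddSubgroup.zmultiples a) : zcoeff x • a = (x : H) :=
  (AddSubgroup.mem_zmultiples_iff.mp x.2).choose_spec

lemma cast_eq_zero_of_smul_eq_zero {a : H} (h : 2 ∣ addOrderOf a) {k : ℤ}
    (hk : k • a = 0) : (k : ZMod 2) = 0 := by
  have h1 : (addOrderOf a : ℤ) ∣ k := addOrderOf_dvd_iff_zsmul_eq_zero.2 hk
  exact (ZMod.intCast_zmod_eq_zero_iff_dvd k 2).2
    (dvd_trans (Int.natCast_dvd_natCast.2 h) h1)

/-- If `2 ∣ addOrderOf a` (including the infinite order case `addOrderOf a = 0`),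
the homomorphism `zmultiples a →+ ZMod 2` sending `a` to `1`. -/
noncomputable def chiSub (a : H) (h : 2 ∣ addOrderOf a) :
    AddSubgroup.zmultiples a →+ ZMod 2 where
  toFun x := ((zcoeff x : ℤ) : ZMod 2)
  map_zero' := by
    have h0 : zcoeff (0 : AddSubgroup.zmultiples a) • a = 0 := by
      rw [zcoeff_spec]; rfl
    exact cast_eq_zero_of_smul_eq_zero h h0
  map_add' x y := by
    have h0 : (zcoeff (x + y) - zcoeff x - zcoeff y) • a = 0 := by
      rw [sub_smul, sub_smul, zcoeff_spec, zcoeff_spec, zcoeff_spec,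
        AddSubgroup.coe_add]
      abel
    have h1 := cast_eq_zero_of_smul_eq_zero h h0
    push_cast at h1 ⊢
    linear_combination h1

lemma chiSub_self (a : H) (h : 2 ∣ addOrderOf a) :
    chiSub a h ⟨a, AddSubgroup.mem_zmultiples a⟩ = 1 := by
  have h0 : (zcoeff (⟨a, AddSubgroup.mem_zmultiples a⟩ : AddSubgroup.zmultiples a) - 1) • a
      = 0 := by
    rw [sub_smul, one_smul, zcoeff_spec]; abel
  have h1 := cast_eq_zero_of_smul_eq_zero h h0
  push_cast at h1
  show ((zcoeff _ : ℤ) : ZMod 2) = 1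
  linear_combination h1

/-- Evaluation of a direct sum at an index, as a homomorphism. -/
def dsComponent {ι : Type*} [DecidableEq ι] {β : ι → Type*} [∀ i, AddCommMonoid (β i)]
    (i : ι) : (⨁ j, β j) →+ β i where
  toFun z := z i
  map_zero' := rfl
  map_add' x y := DirectSum.add_apply x y i

variable {I : Type*} [Fintype I] [DecidableEq I] {e : I → H} {n : I → ℕ}

/-- The direct sum decomposition equivalence coming from a cyclic basis. -/
noncomputable def theta (hb : IsCyclicBasis e n) :
    (⨁ i, AddSubgroup.zmultiples (e i)) ≃+ H :=
  AddEquiv.ofBijective (DirectSum.coeAddMonoidHom fun i => AddSubgroup.zmultiples (e i)) hb.2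

lemma dsComponent_of {ι : Type*} [DecidableEq ι] {β : ι → Type*} [∀ i, AddCommMonoid (β i)]
    (i j : ι) (x : β j) :
    dsComponent i (DirectSum.of β j x) = if h : j = i then h ▸ x else 0 := by
  show (DirectSum.of β j x) i = _
  split_ifs with h
  · subst h; exact DirectSum.of_eq_same _ _
  · exact DirectSum.of_eq_of_ne _ _ _ (Ne.symm h)

/-- The dual character `χᵢ : H →+ ZMod 2` with `χᵢ(eⱼ) = δᵢⱼ` (in the even-order case),
built from the basis decomposition. -/
noncomputable def chi (hb : IsCyclicBasis e n) (i : I) : H →+ ZMod 2 :=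
  if h : 2 ∣ n i then
    (chiSub (e i) (by rw [hb.1 i]; exact h)).comp ((dsComponent i).comp
      (theta hb).symm.toAddMonoidHom)
  else 0

lemma theta_symm_apply (hb : IsCyclicBasis e n) (j : I) :
    (theta hb).symm (e j)
      = DirectSum.of (fun i => AddSubgroup.zmultiples (e i)) j
          ⟨e j, AddSubgroup.mem_zmultiples _⟩ := by
  rw [AddEquiv.symm_apply_eq]
  show e j = (DirectSum.coeAddMonoidHom fun i => AddSubgroup.zmultiples (e i))
      (DirectSum.of _ j ⟨e j, AddSubgroup.mem_zmultiples _⟩)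
  rw [DirectSum.coeAddMonoidHom_of]

lemma chi_apply_ne (hb : IsCyclicBasis e n) {i j : I} (hij : i ≠ j) :
    chi hb i (e j) = 0 := by
  unfold chi
  split_ifs with h
  · rw [AddMonoidHom.comp_apply, AddMonoidHom.comp_apply, AddEquiv.coe_toAddMonoidHom,
      theta_symm_apply hb j, dsComponent_of, dif_neg (Ne.symm hij), map_zero]
  · rfl

lemma chi_apply_self (hb : IsCyclicBasis e n) {i : I} (h : 2 ∣ n i) :
    chi hb i (e i) = 1 := by
  unfold chi
  rw [dif_pos h, AddMonoidHom.comp_apply, AddMonoidHom.comp_apply,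
    AddEquiv.coe_toAddMonoidHom, theta_symm_apply hb i, dsComponent_of, dif_pos rfl]
  exact chiSub_self _ _

lemma apply_eq_zero_of_odd (hb : IsCyclicBasis e n) {i : I} (h : ¬ 2 ∣ n i)
    (y : H →+ ZMod 2) : y (e i) = 0 := by
  have hsm : n i • e i = 0 := (hb.1 i) ▸ addOrderOf_nsmul_eq_zero (e i)
  have h1 : n i • y (e i) = 0 := by rw [← map_nsmul, hsm, map_zero]
  have hodd : Odd (n i) := Nat.not_even_iff_odd.1 fun hev => h hev.two_dvd
  have hcast : ((n i : ℕ) : ZMod 2) = 1 := by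
    rw [← ZMod.natCast_mod (n i) 2, Nat.odd_iff.1 hodd, Nat.cast_one]
  calc y (e i) = ((n i : ℕ) : ZMod 2) * y (e i) := by rw [hcast, one_mul]
    _ = n i • y (e i) := (nsmul_eq_mul _ _).symm
    _ = 0 := h1

lemma hom_ext_basis (hb : IsCyclicBasis e n) {f g : H →+ ZMod 2}
    (h : ∀ i, f (e i) = g (e i)) : f = g := by
  ext x
  obtain ⟨z, rfl⟩ := hb.2.surjective x
  have hz : (DirectSum.coeAddMonoidHom fun i => AddSubgroup.zmultiples (e i)) z
      = ∑ i, ((z i : H)) := by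
    conv_lhs => rw [← DirectSum.sum_univ_of z]
    rw [map_sum]
    exact Finset.sum_congr rfl fun i _ => DirectSum.coeAddMonoidHom_of _ _ _
  rw [hz, map_sum, map_sum]
  refine Finset.sum_congr rfl fun i _ => ?_
  obtain ⟨k, hk⟩ := AddSubgroup.mem_zmultiples_iff.mp (z i).2
  rw [← hk, map_zsmul, map_zsmul, h i]

lemma duality (hb : IsCyclicBasis e n) (y : H →+ ZMod 2) :
    y = ∑ i, (y (e i)).val • chi hb i := by
  refine hom_ext_basis hb fun j => ?_
  rw [AddMonoidHom.finset_sum_apply]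
  rw [Finset.sum_eq_single j (fun i _ hij => by
    rw [AddMonoidHom.nsmul_apply, chi_apply_ne hb hij, smul_zero]) (by simp)]
  rw [AddMonoidHom.nsmul_apply]
  by_cases h : 2 ∣ n j
  · rw [chi_apply_self hb h, zmod2_val_smul_one]
  · rw [apply_eq_zero_of_odd hb h y]
    unfold chi
    rw [dif_neg h]
    simp

lemma zsmul_eq_zero_of_two_torsion {G : Type*} [AddCommGroup G] {g : G}
    (hg : 2 • g = 0) {k : ℤ} (hk : (k : ZMod 2) = 0) : k • g = 0 := by
  obtain ⟨m, rfl⟩ := (ZMod.intCast_zmod_eq_zero_iff_dvd k 2).1 hk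
  have h2 : ((2 : ℕ) : ℤ) • g = 0 := by rw [natCast_zsmul]; exact hg
  rw [mul_comm, mul_zsmul, h2, smul_zero]

end Aux

section Aux2

variable {H : Type*} [AddCommGroup H] {S : Type*} [AddTorsor (H →+ ZMod 2) S]

lemma two_smul_affine (f : AffineFns H S) : 2 • f = 0 := by
  apply Subtype.ext
  funext σ
  show ((2 • f : AffineFns H S) : S → ZMod 2) σ = 0
  rw [AddSubmonoidClass.coe_nsmul]
  exact zmod2_two_nsmul _

lemma nsmul_mem_zmultiples' {G : Type*} [AddCommGroup G] (c : ℕ) (g : G) :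
    c • g ∈ AddSubgroup.zmultiples g :=
  AddSubgroup.mem_zmultiples_iff.2 ⟨c, by rw [natCast_zsmul]⟩

lemma zsmul_one_zmod2 (k : ℤ) : k • (1 : ZMod 2) = (k : ZMod 2) := by
  rw [zsmul_eq_mul, mul_one]

variable {I : Type*} [Fintype I] [DecidableEq I] {e : I → H} {n : I → ℕ}

lemma ebar_eq_zero (hb : IsCyclicBasis e n) {i : I} (h : ¬ 2 ∣ n i) (σ₀ : S) :
    ebarA H S σ₀ (e i) = 0 := by
  apply Subtype.ext
  funext σ
  exact apply_eq_zero_of_odd hb h (σ -ᵥ σ₀)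

lemma addOrderOf_oneAff : addOrderOf (oneAff H S) = 2 := by
  haveI : Fact (Nat.Prime 2) := ⟨Nat.prime_two⟩
  refine addOrderOf_eq_prime (two_smul_affine _) fun hcon => ?_
  obtain ⟨σ⟩ := (inferInstance : Nonempty S)
  have h1 := congrFun (congrArg Subtype.val hcon) σ
  exact one_ne_zero h1

lemma addOrderOf_ebar_even (hb : IsCyclicBasis e n) {i : I} (h : 2 ∣ n i) (σ₀ : S) :
    addOrderOf (ebarA H S σ₀ (e i)) = 2 := by
  haveI : Fact (Nat.Prime 2) := ⟨Nat.prime_two⟩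
  refine addOrderOf_eq_prime (two_smul_affine _) fun hcon => ?_
  have h1 := congrFun (congrArg Subtype.val hcon) (chi hb i +ᵥ σ₀)
  have h2 : ((ebarA H S σ₀ (e i) : AffineFns H S) : S → ZMod 2) (chi hb i +ᵥ σ₀) = 1 := by
    show ((chi hb i +ᵥ σ₀) -ᵥ σ₀) (e i) = 1
    rw [vadd_vsub]
    exact chi_apply_self hb h
  rw [h2] at h1
  exact one_ne_zero h1

/-- Evaluation of an affine function at a point, as a homomorphism. -/
def evalAff (σ : S) : AffineFns H S →+ ZMod 2 :=
  (Pi.evalAddMonoidHom (fun _ : S => ZMod 2) σ).comp (AffineFns H S).subtype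

end Aux2


/-- Let `H` be a finitely generated abelian group with basis
`{(eᵢ, nᵢ) : i ∈ I}`, `S` an affine space over `H⁽²⁾ = Hom(H, ℤ/2ℤ)` with base point `σ₀`,
and `ēᵢ : S → ℤ/2ℤ` defined by `ēᵢ(σ₀ + y) = y(eᵢ)`. Then
`{(1̄, 2)} ∪ {(ēᵢ, gcd(2, nᵢ)) : i ∈ I}` is a basis of `A(S, ℤ/2ℤ)`. -/
theorem stmt13 (H : Type*) [AddCommGroup H] (I : Type*) [Fintype I] [DecidableEq I]
    (e : I → H) (n : I → ℕ) (hb : IsCyclicBasis e n)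
    (S : Type*) [AddTorsor (H →+ ZMod 2) S] (σ₀ : S) :
    IsCyclicBasis
      (fun o : Option I => o.elim (oneAff H S) (fun i => ebarA H S σ₀ (e i)))
      (fun o : Option I => o.elim 2 (fun i => Nat.gcd 2 (n i))) := by
  constructor
  · rintro (_ | i)
    · exact addOrderOf_oneAff
    · show addOrderOf (ebarA H S σ₀ (e i)) = Nat.gcd 2 (n i)
      by_cases h : 2 ∣ n i
      · rw [Nat.gcd_eq_left h]
        exact addOrderOf_ebar_even hb h σ₀
      · rw [(Nat.prime_two.coprime_iff_not_dvd.2 h : Nat.gcd 2 (n i) = 1)]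
        rw [AddMonoid.addOrderOf_eq_one_iff]
        exact ebar_eq_zero hb h σ₀
  constructor
  · -- injectivity
    rw [injective_iff_map_eq_zero]
    intro z hz
    choose k hk using fun j => AddSubgroup.mem_zmultiples_iff.mp (z j).2
    have h0 : ∑ j : Option I, ((z j : AffineFns H S)) = 0 := by
      rw [← DirectSum.sum_univ_of z, map_sum] at hz
      simpa [DirectSum.coeAddMonoidHom_of] using hz
    have hsum : ∀ σ : S, evalAff σ (z none) + ∑ i, evalAff σ ((z (some i) : AffineFns H S))
        = 0 := by
      intro σ
      have h1 := congrArg (evalAff σ) h0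
      rw [map_sum, map_zero, univ_option, Finset.sum_insertNone] at h1
      exact h1
    have hval : ∀ (i : I) (σ : S),
        evalAff σ ((z (some i) : AffineFns H S)) = k (some i) • ((σ -ᵥ σ₀) (e i)) := by
      intro i σ
      rw [← hk (some i), map_zsmul]
      rfl
    have hvnone : ∀ σ : S, evalAff σ ((z none : AffineFns H S)) = (k none : ZMod 2) := by
      intro σ
      rw [← hk none, map_zsmul]
      show k none • (1 : ZMod 2) = _
      exact zsmul_one_zmod2 _
    have hnone : (k none : ZMod 2) = 0 := by
      have h1 := hsum σ₀
      rw [hvnone σ₀] at h1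
      have h2 : ∀ i : I, evalAff σ₀ ((z (some i) : AffineFns H S)) = 0 := by
        intro i
        rw [hval i σ₀, vsub_self]
        show k (some i) • ((0 : H →+ ZMod 2) (e i)) = 0
        rw [AddMonoidHom.zero_apply, smul_zero]
      rw [Finset.sum_congr rfl fun i _ => h2 i, Finset.sum_const_zero, add_zero] at h1
      exact h1
    have hsome : ∀ i : I, 2 ∣ n i → (k (some i) : ZMod 2) = 0 := by
      intro i hi
      have h1 := hsum (chi hb i +ᵥ σ₀)
      rw [hvnone, hnone, zero_add] at h1
      have h2 : ∀ i' : I, evalAff (chi hb i +ᵥ σ₀) ((z (some i') : AffineFns H S))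
          = k (some i') • (chi hb i (e i')) := by
        intro i'
        rw [hval i' _, vadd_vsub]
      rw [Finset.sum_congr rfl fun i' _ => h2 i'] at h1
      rw [Finset.sum_eq_single i (fun i' _ hne => by
        rw [chi_apply_ne hb (Ne.symm hne), smul_zero]) (by simp)] at h1
      rw [chi_apply_self hb hi, zsmul_one_zmod2] at h1
      exact h1
    refine DFinsupp.ext fun j => ?_
    apply Subtype.ext
    match j with
    | none =>
      rw [← hk none]
      exact zsmul_eq_zero_of_two_torsion (two_smul_affine _) hnone
    | some i =>
      rw [← hk (some i)]
      by_cases h : 2 ∣ n i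
      · exact zsmul_eq_zero_of_two_torsion (two_smul_affine _) (hsome i h)
      · show k (some i) • ebarA H S σ₀ (e i) = _
        rw [ebar_eq_zero hb h σ₀, smul_zero]
        rfl
  · -- surjectivity
    intro f
    obtain ⟨l, hl⟩ := f.2
    classical
    refine ⟨DirectSum.of _ none ⟨(f.1 σ₀).val • oneAff H S, nsmul_mem_zmultiples' _ _⟩ +
      ∑ i : I, DirectSum.of _ (some i)
        ⟨(l (chi hb i)).val • ebarA H S σ₀ (e i), nsmul_mem_zmultiples' _ _⟩, ?_⟩
    rw [map_add, map_sum]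
    simp only [DirectSum.coeAddMonoidHom_of]
    apply Subtype.ext
    funext σ
    rw [AddSubgroup.coe_add, AddSubmonoidClass.coe_finset_sum]
    simp only [AddSubmonoidClass.coe_nsmul, Pi.add_apply, Finset.sum_apply, Pi.smul_apply]
    show (f.1 σ₀).val • (1 : ZMod 2) + ∑ i, (l (chi hb i)).val • ((σ -ᵥ σ₀) (e i)) = f.1 σ
    have hσ : f.1 σ = f.1 σ₀ + l (σ -ᵥ σ₀) := by
      conv_lhs => rw [← vsub_vadd σ σ₀]
      exact hl σ₀ (σ -ᵥ σ₀)
    have hly : l (σ -ᵥ σ₀) = ∑ i, ((σ -ᵥ σ₀) (e i)).val • l (chi hb i) := by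
      conv_lhs => rw [duality hb (σ -ᵥ σ₀)]
      rw [map_sum]
      exact Finset.sum_congr rfl fun i _ => map_nsmul l _ _
    rw [hσ, hly, zmod2_val_smul_one]
    congr 1
    exact Finset.sum_congr rfl fun i _ => zmod2_val_smul_comm _ _
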